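/- Two-sided performance difference bound: for any Q, f : S × A → ℝ, |J(π_f) − J(π_Q)| ≤ 2·max{ (E_{d_{π_f}}[TQ − Q] + E_{d_{π_Q}}[Q − TQ])/(1-γ), (E_{d_{π_Q}}[Tf − f] + E_{d_{π_f}}[f − Tf])/(1-γ) }. -/

import Mathlib

open scoped BigOperators

/-- Time-`t` state-action marginal distribution of a policy in a finite MDP. -/
noncomputable def marg {S A : Type*} [Fintype S] [Fintype A]
    (d0 : S → ℝ) (P : S → A → S → ℝ) (pol : S → A → ℝ) : ℕ → S → A → ℝ
  | 0 => fun s a => d0 s * pol s a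
  | (t + 1) => fun s' a' => (∑ s, ∑ a, marg d0 P pol t s a * P s a s') * pol s' a'

/-- Normalized discounted state-action occupancy `d_π(s,a)`. -/
noncomputable def occ {S A : Type*} [Fintype S] [Fintype A]
    (γ : ℝ) (d0 : S → ℝ) (P : S → A → S → ℝ) (pol : S → A → ℝ) (s : S) (a : A) : ℝ :=
  (1 - γ) * ∑' t : ℕ, γ ^ t * marg d0 P pol t s a

/-- Expected discounted return `J(π)`. -/
noncomputable def Jret {S A : Type*} [Fintype S] [Fintype A]
    (γ : ℝ) (d0 : S → ℝ) (P : S → A → S → ℝ) (R : S → A → ℝ) (pol : S → A → ℝ) : ℝ :=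
  ∑' t : ℕ, γ ^ t * ∑ s, ∑ a, marg d0 P pol t s a * R s a

/-- Bellman optimality operator `(T Q)(s,a) = R(s,a) + γ Σ_{s'} P(s'|s,a) max_{a'} Q(s',a')`. -/
noncomputable def bellmanT {S A : Type*} [Fintype S] [Fintype A] [Nonempty A]
    (γ : ℝ) (P : S → A → S → ℝ) (R : S → A → ℝ) (Q : S → A → ℝ) (s : S) (a : A) : ℝ :=
  R s a + γ * ∑ s', P s a s' * (⨆ a', Q s' a')

/-- A deterministic policy viewed as a stochastic policy. -/
noncomputable def detPol {S A : Type*} [DecidableEq A] (g : S → A) : S → A → ℝ :=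
  fun s a => if a = g s then 1 else 0
set_option linter.unusedSectionVars false

section Aux
variable {S A : Type*} [Fintype S] [Fintype A] [DecidableEq A]

lemma detPol_mul_sum (g : S → A) (s : S) (h : A → ℝ) :
    ∑ a, detPol g s a * h a = h (g s) := by
  simp [detPol, ite_mul]

lemma detPol_sum_one (g : S → A) (s : S) : ∑ a, detPol g s a = 1 := by
  simp [detPol]

lemma marg_nonneg (d0 : S → ℝ) (hd0 : ∀ s, 0 ≤ d0 s) (P : S → A → S → ℝ)
    (hP : ∀ s a s', 0 ≤ P s a s') (g : S → A) :
    ∀ t s a, 0 ≤ marg d0 P (detPol g) t s a := by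
  intro t
  induction t with
  | zero =>
    intro s a
    apply mul_nonneg (hd0 s)
    unfold detPol; split <;> norm_num
  | succ t ih =>
    intro s' a'
    apply mul_nonneg
    · exact Finset.sum_nonneg fun s _ => Finset.sum_nonneg fun a _ =>
        mul_nonneg (ih s a) (hP s a s')
    · unfold detPol; split <;> norm_num

lemma marg_sum (d0 : S → ℝ) (hd0sum : ∑ s, d0 s = 1) (P : S → A → S → ℝ)
    (hPsum : ∀ s a, ∑ s', P s a s' = 1) (g : S → A) :
    ∀ t, ∑ s, ∑ a, marg d0 P (detPol g) t s a = 1 := by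
  intro t
  induction t with
  | zero =>
    show ∑ s, ∑ a, d0 s * detPol g s a = 1
    calc ∑ s, ∑ a, d0 s * detPol g s a = ∑ s, d0 s * ∑ a, detPol g s a := by
          simp [Finset.mul_sum]
      _ = 1 := by simp [detPol_sum_one, hd0sum]
  | succ t ih =>
    show ∑ s', ∑ a', (∑ s, ∑ a, marg d0 P (detPol g) t s a * P s a s') * detPol g s' a' = 1
    calc ∑ s', ∑ a', (∑ s, ∑ a, marg d0 P (detPol g) t s a * P s a s') * detPol g s' a'
        = ∑ s', (∑ s, ∑ a, marg d0 P (detPol g) t s a * P s a s') * ∑ a', detPol g s' a' := by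
          simp [Finset.mul_sum]
      _ = ∑ s', ∑ s, ∑ a, marg d0 P (detPol g) t s a * P s a s' := by
          simp [detPol_sum_one]
      _ = ∑ s, ∑ s', ∑ a, marg d0 P (detPol g) t s a * P s a s' := Finset.sum_comm
      _ = ∑ s, ∑ a, ∑ s', marg d0 P (detPol g) t s a * P s a s' :=
          Finset.sum_congr rfl fun _ _ => Finset.sum_comm
      _ = ∑ s, ∑ a, marg d0 P (detPol g) t s a := by
          refine Finset.sum_congr rfl fun s _ => Finset.sum_congr rfl fun a _ => ?_
          rw [← Finset.mul_sum, hPsum, mul_one]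
      _ = 1 := ih

lemma marg_le_one (d0 : S → ℝ) (hd0 : ∀ s, 0 ≤ d0 s) (hd0sum : ∑ s, d0 s = 1)
    (P : S → A → S → ℝ) (hP : ∀ s a s', 0 ≤ P s a s')
    (hPsum : ∀ s a, ∑ s', P s a s' = 1) (g : S → A) (t : ℕ) (s : S) (a : A) :
    marg d0 P (detPol g) t s a ≤ 1 := by
  have h0 := marg_nonneg d0 hd0 P hP g
  calc marg d0 P (detPol g) t s a ≤ ∑ a, marg d0 P (detPol g) t s a :=
        Finset.single_le_sum (fun i _ => h0 t s i) (Finset.mem_univ a)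
    _ ≤ ∑ s, ∑ a, marg d0 P (detPol g) t s a :=
        Finset.single_le_sum (fun i _ => Finset.sum_nonneg fun j _ => h0 t i j)
          (Finset.mem_univ s)
    _ = 1 := marg_sum d0 hd0sum P hPsum g t

lemma summable_geom_of_bdd {γ : ℝ} (hγ0 : 0 ≤ γ) (hγ1 : γ < 1) (u : ℕ → ℝ) (C : ℝ)
    (h : ∀ t, |u t| ≤ C) : Summable (fun t => γ ^ t * u t) := by
  apply Summable.of_norm
  apply Summable.of_nonneg_of_le (fun t => norm_nonneg _) (fun t => ?_)
    ((summable_geometric_of_lt_one hγ0 hγ1).mul_right C)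
  rw [Real.norm_eq_abs, abs_mul, abs_pow, abs_of_nonneg hγ0]
  exact mul_le_mul_of_nonneg_left (h t) (pow_nonneg hγ0 t)

lemma exp_abs_le (μ : S → A → ℝ) (hμ0 : ∀ s a, 0 ≤ μ s a) (hμ1 : ∀ s a, μ s a ≤ 1)
    (F : S → A → ℝ) :
    |∑ s, ∑ a, μ s a * F s a| ≤ ∑ s, ∑ a, |F s a| := by
  calc |∑ s, ∑ a, μ s a * F s a| ≤ ∑ s, |∑ a, μ s a * F s a| :=
        Finset.abs_sum_le_sum_abs _ _
    _ ≤ ∑ s, ∑ a, |μ s a * F s a| :=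
        Finset.sum_le_sum fun s _ => Finset.abs_sum_le_sum_abs _ _
    _ ≤ ∑ s, ∑ a, |F s a| := by
        refine Finset.sum_le_sum fun s _ => Finset.sum_le_sum fun a _ => ?_
        rw [abs_mul, abs_of_nonneg (hμ0 s a)]
        calc μ s a * |F s a| ≤ 1 * |F s a| :=
              mul_le_mul_of_nonneg_right (hμ1 s a) (abs_nonneg _)
          _ = |F s a| := one_mul _

end Aux

section Main
variable {S A : Type*} [Fintype S] [Fintype A] [DecidableEq A]

lemma jret_eq (γ : ℝ) (hγ0 : 0 ≤ γ) (hγ1 : γ < 1)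
    (d0 : S → ℝ) (hd0 : ∀ s, 0 ≤ d0 s) (hd0sum : ∑ s, d0 s = 1)
    (P : S → A → S → ℝ) (hP : ∀ s a s', 0 ≤ P s a s')
    (hPsum : ∀ s a, ∑ s', P s a s' = 1)
    (R : S → A → ℝ) (g : S → A) (F : S → A → ℝ) :
    Jret γ d0 P R (detPol g) = (∑ s, d0 s * F s (g s))
      + ∑' t : ℕ, γ ^ t * ∑ s, ∑ a, marg d0 P (detPol g) t s a *
          ((R s a + γ * ∑ s', P s a s' * F s' (g s')) - F s a) := by
  set μ := marg d0 P (detPol g) with hμ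
  have hμ0 : ∀ t s a, 0 ≤ μ t s a := marg_nonneg d0 hd0 P hP g
  have hμ1 : ∀ t s a, μ t s a ≤ 1 := marg_le_one d0 hd0 hd0sum P hP hPsum g
  set e : ℕ → ℝ := fun t => γ ^ t * ∑ s, ∑ a, μ t s a * F s a with he
  set r : ℕ → ℝ := fun t => γ ^ t * ∑ s, ∑ a, μ t s a * R s a with hr
  -- shift identity
  have hshift : ∀ t, ∑ s', ∑ a', μ (t + 1) s' a' * F s' a'
      = ∑ s, ∑ a, μ t s a * ∑ s', P s a s' * F s' (g s') := by
    intro t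
    have : ∀ s' a', μ (t + 1) s' a' = (∑ s, ∑ a, μ t s a * P s a s') * detPol g s' a' := by
      intro s' a'; rw [hμ]; rfl
    calc ∑ s', ∑ a', μ (t + 1) s' a' * F s' a'
        = ∑ s', ∑ a', (∑ s, ∑ a, μ t s a * P s a s') * (detPol g s' a' * F s' a') := by
          simp only [this, mul_assoc]
      _ = ∑ s', (∑ s, ∑ a, μ t s a * P s a s') * F s' (g s') := by
          refine Finset.sum_congr rfl fun s' _ => ?_
          rw [← Finset.mul_sum, detPol_mul_sum]
      _ = ∑ s', ∑ s, ∑ a, μ t s a * (P s a s' * F s' (g s')) := by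
          simp only [Finset.sum_mul, mul_assoc]
      _ = ∑ s, ∑ s', ∑ a, μ t s a * (P s a s' * F s' (g s')) := Finset.sum_comm
      _ = ∑ s, ∑ a, ∑ s', μ t s a * (P s a s' * F s' (g s')) :=
          Finset.sum_congr rfl fun _ _ => Finset.sum_comm
      _ = ∑ s, ∑ a, μ t s a * ∑ s', P s a s' * F s' (g s') := by
          simp only [← Finset.mul_sum]
  have key : ∀ t, γ ^ t * ∑ s, ∑ a, μ t s a *
      ((R s a + γ * ∑ s', P s a s' * F s' (g s')) - F s a)
      = r t + (e (t + 1) - e t) := by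
    intro t
    have expand : ∑ s, ∑ a, μ t s a * ((R s a + γ * ∑ s', P s a s' * F s' (g s')) - F s a)
        = (∑ s, ∑ a, μ t s a * R s a)
          + γ * (∑ s, ∑ a, μ t s a * ∑ s', P s a s' * F s' (g s'))
          - ∑ s, ∑ a, μ t s a * F s a := by
      rw [Finset.mul_sum]
      rw [← Finset.sum_add_distrib, ← Finset.sum_sub_distrib]
      refine Finset.sum_congr rfl fun s _ => ?_
      rw [Finset.mul_sum, ← Finset.sum_add_distrib, ← Finset.sum_sub_distrib]
      refine Finset.sum_congr rfl fun a _ => ?_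
      ring
    rw [expand, hr, he, ← hshift t]
    ring
  -- summability
  have hesum : Summable e := by
    apply summable_geom_of_bdd hγ0 hγ1 _ (∑ s, ∑ a, |F s a|)
    intro t; exact exp_abs_le (μ t) (hμ0 t) (hμ1 t) F
  have hrsum : Summable r := by
    apply summable_geom_of_bdd hγ0 hγ1 _ (∑ s, ∑ a, |R s a|)
    intro t; exact exp_abs_le (μ t) (hμ0 t) (hμ1 t) R
  have hesum' : Summable (fun t => e (t + 1)) := (summable_nat_add_iff 1).2 hesum
  have te : ∑' t : ℕ, (e (t + 1) - e t) = -(e 0) := by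
    rw [Summable.tsum_sub hesum' hesum, Summable.tsum_eq_zero_add hesum]
    ring
  have main : ∑' t : ℕ, γ ^ t * ∑ s, ∑ a, μ t s a *
      ((R s a + γ * ∑ s', P s a s' * F s' (g s')) - F s a)
      = (∑' t : ℕ, r t) + -(e 0) := by
    rw [tsum_congr key, Summable.tsum_add hrsum (hesum'.sub hesum), te]
  have he0 : e 0 = ∑ s, d0 s * F s (g s) := by
    simp only [he, pow_zero, one_mul, hμ]
    show ∑ s, ∑ a, (d0 s * detPol g s a) * F s a = _
    refine Finset.sum_congr rfl fun s _ => ?_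
    simp only [mul_assoc, ← Finset.mul_sum, detPol_mul_sum]
  have hJ : Jret γ d0 P R (detPol g) = ∑' t : ℕ, r t := rfl
  rw [main, he0, hJ]
  ring

lemma occ_sum_eq (γ : ℝ) (hγ0 : 0 ≤ γ) (hγ1 : γ < 1)
    (d0 : S → ℝ) (hd0 : ∀ s, 0 ≤ d0 s) (hd0sum : ∑ s, d0 s = 1)
    (P : S → A → S → ℝ) (hP : ∀ s a s', 0 ≤ P s a s')
    (hPsum : ∀ s a, ∑ s', P s a s' = 1)
    (g : S → A) (G : S → A → ℝ) :
    ∑ s, ∑ a, occ γ d0 P (detPol g) s a * G s a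
      = (1 - γ) * ∑' t : ℕ, γ ^ t * ∑ s, ∑ a, marg d0 P (detPol g) t s a * G s a := by
  set μ := marg d0 P (detPol g) with hμ
  have hμ0 : ∀ t s a, 0 ≤ μ t s a := marg_nonneg d0 hd0 P hP g
  have hμ1 : ∀ t s a, μ t s a ≤ 1 := marg_le_one d0 hd0 hd0sum P hP hPsum g
  have hsm : ∀ s a, Summable (fun t => γ ^ t * (μ t s a * G s a)) := by
    intro s a
    apply summable_geom_of_bdd hγ0 hγ1 _ |G s a|
    intro t
    rw [abs_mul]
    calc |μ t s a| * |G s a| ≤ 1 * |G s a| := by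
          apply mul_le_mul_of_nonneg_right _ (abs_nonneg _)
          rw [abs_of_nonneg (hμ0 t s a)]; exact hμ1 t s a
      _ = |G s a| := one_mul _
  have step1 : ∀ s a, occ γ d0 P (detPol g) s a * G s a
      = (1 - γ) * ∑' t : ℕ, γ ^ t * (μ t s a * G s a) := by
    intro s a
    unfold occ
    rw [mul_assoc, ← tsum_mul_right]
    congr 1
    exact tsum_congr fun t => by rw [← hμ]; ring
  calc ∑ s, ∑ a, occ γ d0 P (detPol g) s a * G s a
      = (1 - γ) * ∑ s, ∑ a, ∑' t : ℕ, γ ^ t * (μ t s a * G s a) := by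
        rw [Finset.mul_sum]
        refine Finset.sum_congr rfl fun s _ => ?_
        rw [Finset.mul_sum]
        exact Finset.sum_congr rfl fun a _ => step1 s a
    _ = (1 - γ) * ∑' t : ℕ, ∑ s, ∑ a, γ ^ t * (μ t s a * G s a) := by
        congr 1
        calc ∑ s, ∑ a, ∑' t : ℕ, γ ^ t * (μ t s a * G s a)
            = ∑ s, ∑' t : ℕ, ∑ a, γ ^ t * (μ t s a * G s a) :=
              Finset.sum_congr rfl fun s _ => (Summable.tsum_finsetSum (fun a _ => hsm s a)).symm
          _ = ∑' t : ℕ, ∑ s, ∑ a, γ ^ t * (μ t s a * G s a) :=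
              (Summable.tsum_finsetSum (fun s _ => summable_sum fun a _ => hsm s a)).symm
    _ = (1 - γ) * ∑' t : ℕ, γ ^ t * ∑ s, ∑ a, μ t s a * G s a := by
        congr 1
        refine tsum_congr fun t => ?_
        rw [Finset.mul_sum]
        exact Finset.sum_congr rfl fun s _ => by rw [Finset.mul_sum]

lemma one_side [Nonempty A] (γ : ℝ) (hγ0 : 0 ≤ γ) (hγ1 : γ < 1)
    (d0 : S → ℝ) (hd0 : ∀ s, 0 ≤ d0 s) (hd0sum : ∑ s, d0 s = 1)
    (P : S → A → S → ℝ) (hP : ∀ s a s', 0 ≤ P s a s')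
    (hPsum : ∀ s a, ∑ s', P s a s' = 1)
    (R : S → A → ℝ) (Q : S → A → ℝ)
    (gQ : S → A) (hgQ : ∀ s a, Q s a ≤ Q s (gQ s)) (g1 : S → A) :
    Jret γ d0 P R (detPol g1) - Jret γ d0 P R (detPol gQ)
      ≤ ((∑ s, ∑ a, occ γ d0 P (detPol g1) s a * (bellmanT γ P R Q s a - Q s a))
        + (∑ s, ∑ a, occ γ d0 P (detPol gQ) s a * (Q s a - bellmanT γ P R Q s a))) / (1 - γ) := by
  have hγpos : (0:ℝ) < 1 - γ := by linarith
  have hsup : ∀ s', (⨆ a', Q s' a') = Q s' (gQ s') := fun s' =>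
    le_antisymm (ciSup_le (hgQ s')) (le_ciSup (Set.finite_range _).bddAbove (gQ s'))
  have h1 := jret_eq γ hγ0 hγ1 d0 hd0 hd0sum P hP hPsum R g1 Q
  have h2 := jret_eq γ hγ0 hγ1 d0 hd0 hd0sum P hP hPsum R gQ Q
  have h2' : Jret γ d0 P R (detPol gQ) = (∑ s, d0 s * Q s (gQ s))
      + ∑' t : ℕ, γ ^ t * ∑ s, ∑ a, marg d0 P (detPol gQ) t s a *
          (bellmanT γ P R Q s a - Q s a) := by
    rw [h2]; congr 1
    exact tsum_congr fun t => by simp only [bellmanT, hsup]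
  -- inequality for the g1 tsum
  have hμ0 : ∀ t s a, 0 ≤ marg d0 P (detPol g1) t s a := marg_nonneg d0 hd0 P hP g1
  have hμ1 : ∀ t s a, marg d0 P (detPol g1) t s a ≤ 1 :=
    marg_le_one d0 hd0 hd0sum P hP hPsum g1
  have hptle : ∀ s a, (R s a + γ * ∑ s', P s a s' * Q s' (g1 s')) - Q s a
      ≤ bellmanT γ P R Q s a - Q s a := by
    intro s a
    apply sub_le_sub_right
    unfold bellmanT
    apply add_le_add le_rfl
    apply mul_le_mul_of_nonneg_left _ hγ0
    refine Finset.sum_le_sum fun s' _ => ?_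
    exact mul_le_mul_of_nonneg_left (le_ciSup (Set.finite_range _).bddAbove (g1 s')) (hP s a s')
  have hsum1 : Summable (fun t => γ ^ t * ∑ s, ∑ a, marg d0 P (detPol g1) t s a *
      ((R s a + γ * ∑ s', P s a s' * Q s' (g1 s')) - Q s a)) := by
    apply summable_geom_of_bdd hγ0 hγ1 _
      (∑ s, ∑ a, |(R s a + γ * ∑ s', P s a s' * Q s' (g1 s')) - Q s a|)
    intro t; exact exp_abs_le _ (hμ0 t) (hμ1 t) _
  have hsum2 : Summable (fun t => γ ^ t * ∑ s, ∑ a, marg d0 P (detPol g1) t s a *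
      (bellmanT γ P R Q s a - Q s a)) := by
    apply summable_geom_of_bdd hγ0 hγ1 _ (∑ s, ∑ a, |bellmanT γ P R Q s a - Q s a|)
    intro t; exact exp_abs_le _ (hμ0 t) (hμ1 t) _
  have hle : (∑' t : ℕ, γ ^ t * ∑ s, ∑ a, marg d0 P (detPol g1) t s a *
      ((R s a + γ * ∑ s', P s a s' * Q s' (g1 s')) - Q s a))
      ≤ ∑' t : ℕ, γ ^ t * ∑ s, ∑ a, marg d0 P (detPol g1) t s a *
          (bellmanT γ P R Q s a - Q s a) := by
    refine Summable.tsum_le_tsum (fun t => ?_) hsum1 hsum2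
    apply mul_le_mul_of_nonneg_left _ (pow_nonneg hγ0 t)
    refine Finset.sum_le_sum fun s _ => Finset.sum_le_sum fun a _ => ?_
    exact mul_le_mul_of_nonneg_left (hptle s a) (hμ0 t s a)
  -- convert tsums to occ sums
  have hc1 : (∑' t : ℕ, γ ^ t * ∑ s, ∑ a, marg d0 P (detPol g1) t s a *
      (bellmanT γ P R Q s a - Q s a))
      = (∑ s, ∑ a, occ γ d0 P (detPol g1) s a * (bellmanT γ P R Q s a - Q s a)) / (1 - γ) := by
    rw [occ_sum_eq γ hγ0 hγ1 d0 hd0 hd0sum P hP hPsum g1]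
    field_simp
  have hc2 : (∑' t : ℕ, γ ^ t * ∑ s, ∑ a, marg d0 P (detPol gQ) t s a *
      (bellmanT γ P R Q s a - Q s a))
      = (∑ s, ∑ a, occ γ d0 P (detPol gQ) s a * (bellmanT γ P R Q s a - Q s a)) / (1 - γ) := by
    rw [occ_sum_eq γ hγ0 hγ1 d0 hd0 hd0sum P hP hPsum gQ]
    field_simp
  have hneg : (∑ s, ∑ a, occ γ d0 P (detPol gQ) s a * (Q s a - bellmanT γ P R Q s a))
      = -(∑ s, ∑ a, occ γ d0 P (detPol gQ) s a * (bellmanT γ P R Q s a - Q s a)) := by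
    rw [← Finset.sum_neg_distrib]
    refine Finset.sum_congr rfl fun s _ => ?_
    rw [← Finset.sum_neg_distrib]
    exact Finset.sum_congr rfl fun a _ => by ring
  have he0le : (∑ s, d0 s * Q s (g1 s)) ≤ ∑ s, d0 s * Q s (gQ s) :=
    Finset.sum_le_sum fun s _ => mul_le_mul_of_nonneg_left (hgQ s (g1 s)) (hd0 s)
  rw [add_div, h1, h2', hneg, neg_div]
  rw [hc1] at hle
  linarith [hle, hc2]

end Main

/-- Two-sided performance difference bound. -/
theorem stmt4 {S A : Type*} [Fintype S] [Fintype A] [Nonempty A] [DecidableEq A]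
    (γ : ℝ) (hγ0 : 0 ≤ γ) (hγ1 : γ < 1)
    (d0 : S → ℝ) (hd0 : ∀ s, 0 ≤ d0 s) (hd0sum : ∑ s, d0 s = 1)
    (P : S → A → S → ℝ) (hP : ∀ s a s', 0 ≤ P s a s') (hPsum : ∀ s a, ∑ s', P s a s' = 1)
    (R : S → A → ℝ)
    (Q f : S → A → ℝ)
    (gQ : S → A) (hgQ : ∀ s a, Q s a ≤ Q s (gQ s))
    (gf : S → A) (hgf : ∀ s a, f s a ≤ f s (gf s)) :
    |Jret γ d0 P R (detPol gf) - Jret γ d0 P R (detPol gQ)|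
      ≤ 2 * max
        (((∑ s, ∑ a, occ γ d0 P (detPol gf) s a * (bellmanT γ P R Q s a - Q s a))
          + (∑ s, ∑ a, occ γ d0 P (detPol gQ) s a * (Q s a - bellmanT γ P R Q s a))) / (1 - γ))
        (((∑ s, ∑ a, occ γ d0 P (detPol gQ) s a * (bellmanT γ P R f s a - f s a))
          + (∑ s, ∑ a, occ γ d0 P (detPol gf) s a * (f s a - bellmanT γ P R f s a))) / (1 - γ)) := by
  have b1 := one_side γ hγ0 hγ1 d0 hd0 hd0sum P hP hPsum R Q gQ hgQ gf
  have b2 := one_side γ hγ0 hγ1 d0 hd0 hd0sum P hP hPsum R f gf hgf gQ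
  set M1 := ((∑ s, ∑ a, occ γ d0 P (detPol gf) s a * (bellmanT γ P R Q s a - Q s a))
      + (∑ s, ∑ a, occ γ d0 P (detPol gQ) s a * (Q s a - bellmanT γ P R Q s a))) / (1 - γ) with hM1
  set M2 := ((∑ s, ∑ a, occ γ d0 P (detPol gQ) s a * (bellmanT γ P R f s a - f s a))
      + (∑ s, ∑ a, occ γ d0 P (detPol gf) s a * (f s a - bellmanT γ P R f s a))) / (1 - γ) with hM2
  have h1 : Jret γ d0 P R (detPol gf) - Jret γ d0 P R (detPol gQ) ≤ max M1 M2 :=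
    b1.trans (le_max_left _ _)
  have h2 : -(Jret γ d0 P R (detPol gf) - Jret γ d0 P R (detPol gQ)) ≤ max M1 M2 := by
    rw [neg_sub]; exact b2.trans (le_max_right _ _)
  rw [abs_le]
  constructor <;> linarith
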